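/- Let 0 = n₀ < n₁ < ⋯ < n_k be fixed integers, E = ⋃_{j=0}^k ([0,2π) + 2π n_j), Eₙ = E + 2πn, and g = (1/√(2π)) χ_E. For f ∈ L²(ℝ), let Fₘ be the 2π-periodic function on ℝ defined by Fₘ(ξ) = ∑_{j=0}^k f(ξ + 2π(n_j + m)) for ξ ∈ [0,2π). Then ∑_{m,n∈ℤ} |⟨Mₘ T_{2nπ} g, f⟩|² = (1/(k+1)) ∑_{n∈ℤ} ‖Fₙ · χ_{Eₙ}‖². -/

import Mathlib

open MeasureTheory Real Set
open scoped ENNReal NNReal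
set_option maxHeartbeats 1000000

lemma disj_Ico' {a b : ℤ} (hab : a ≠ b) :
    Disjoint (Set.Ico (2*π*(a:ℝ)) (2*π*a + 2*π)) (Set.Ico (2*π*(b:ℝ)) (2*π*b + 2*π)) := by
  have hπ : (0:ℝ) < 2*π := by positivity
  rw [Set.Ico_disjoint_Ico]
  rcases lt_or_gt_of_ne hab with h | h
  · have : (a:ℝ) + 1 ≤ b := by exact_mod_cast h
    calc min (2*π*a + 2*π) (2*π*b + 2*π) ≤ 2*π*a + 2*π := min_le_left _ _
    _ ≤ 2*π*b := by nlinarith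
    _ ≤ max (2*π*(a:ℝ)) (2*π*b) := le_max_right _ _
  · have : (b:ℝ) + 1 ≤ a := by exact_mod_cast h
    calc min (2*π*a + 2*π) (2*π*b + 2*π) ≤ 2*π*b + 2*π := min_le_right _ _
    _ ≤ 2*π*a := by nlinarith
    _ ≤ max (2*π*(a:ℝ)) (2*π*b) := le_max_left _ _

lemma floor_shift' {ξ : ℝ} (hξ : ξ ∈ Set.Ico (0:ℝ) (2*π)) (q : ℤ) :
    ⌊(ξ + 2*π*q)/(2*π)⌋ = q := by
  have h2π : (0:ℝ) < 2*π := by positivity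
  have : (ξ + 2*π*q)/(2*π) = ξ/(2*π) + q := by field_simp
  rw [this, Int.floor_add_intCast, Int.floor_eq_zero_iff.2, zero_add]
  constructor
  · exact div_nonneg hξ.1 h2π.le
  · exact (div_lt_one h2π).2 hξ.2

lemma null_preimage' (c : ℝ) {N : Set ℝ} (hN : volume N = 0) :
    volume {ξ : ℝ | ξ - 2*π*(⌊ξ/(2*π)⌋:ℤ) + c ∈ N} = 0 := by
  have hsub : {ξ : ℝ | ξ - 2*π*(⌊ξ/(2*π)⌋:ℤ) + c ∈ N} ⊆
      ⋃ l : ℤ, (fun ξ : ℝ => ξ + (c - 2*π*l)) ⁻¹' N := by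
    intro ξ hξ
    refine Set.mem_iUnion.2 ⟨⌊ξ/(2*π)⌋, ?_⟩
    simpa [sub_eq_add_neg, add_comm, add_left_comm, add_assoc] using hξ
  refine measure_mono_null hsub ?_
  refine measure_iUnion_null fun l => ?_
  rw [measure_preimage_add_right]
  exact hN

theorem stmt_3_aux (k : ℕ) (n : Fin (k + 1) → ℤ)
    (hmono : StrictMono n)
    (E : Set ℝ)
    (hE : E = ⋃ j : Fin (k + 1),
      Set.Ico (2 * π * (n j : ℝ)) (2 * π * (n j : ℝ) + 2 * π))
    (g : ℝ → ℂ) (hg : g = fun t : ℝ =>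
      (1 / Real.sqrt (2 * π) : ℝ) * E.indicator (fun _ => (1 : ℂ)) t)
    (f : ℝ → ℂ) (hf : MemLp f 2 volume) (hsm : StronglyMeasurable f)
    (F : ℤ → ℝ → ℂ)
    (hF : F = fun (m : ℤ) (ξ : ℝ) => ∑ j : Fin (k + 1),
      f ((ξ - 2 * π * (⌊ξ / (2 * π)⌋ : ℝ)) + 2 * π * ((n j : ℝ) + (m : ℝ)))) :
    ∑' p : ℤ × ℤ, ‖∫ t : ℝ, (Complex.exp (Complex.I * (p.1 : ℂ) * (t : ℂ)) *
        g (t - 2 * π * (p.2 : ℝ))) * (starRingEnd ℂ) (f t)‖ ^ 2 =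
      ((1 : ℝ) / (k + 1)) * ∑' m : ℤ,
        ∫ ξ : ℝ, ‖F m ξ * E.indicator (fun _ => (1 : ℂ)) (ξ - 2 * π * (m : ℝ))‖ ^ 2 := by
  have hπ : (0:ℝ) < 2*π := by positivity
  set c₀ : ℂ := ((1 / Real.sqrt (2 * π) : ℝ) : ℂ) with hc₀
  set A : Fin (k+1) → ℤ → ℝ := fun j l => 2*π*((n j : ℝ) + (l:ℝ)) with hA
  set I : Fin (k+1) → ℤ → Set ℝ := fun j l => Set.Ico (A j l) (A j l + 2*π) with hI
  set φ : ℤ → ℝ → ℂ := fun l ξ => ∑ j : Fin (k+1), f (ξ + A j l) with hφ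
  set b : ℤ → ℝ := fun l => ∫ ξ in Set.Ioc 0 (2*π), ‖φ l ξ‖^2 with hb
  -- P1 : preimage
  have hpre : ∀ l : ℤ, (fun t : ℝ => t - 2*π*(l:ℝ)) ⁻¹' E = ⋃ j, I j l := by
    intro l
    rw [hE, Set.preimage_iUnion]
    refine Set.iUnion_congr fun j => ?_
    ext t
    simp only [Set.mem_preimage, Set.mem_Ico, hI, hA]
    constructor <;> rintro ⟨h1, h2⟩ <;> constructor <;> [skip; skip; skip; skip] <;> nlinarith
  -- P2 : pairwise disjoint
  have hdisj : ∀ l : ℤ, Pairwise (Function.onFun Disjoint fun j => I j l) := by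
    intro l i j hij
    have hne : n i + l ≠ n j + l :=
      fun h => hij (hmono.injective (by omega))
    have h1 : I i l = Set.Ico (2*π*((n i + l : ℤ):ℝ)) (2*π*((n i + l : ℤ):ℝ) + 2*π) := by
      simp only [hI, hA]; push_cast; ring_nf
    have h2 : I j l = Set.Ico (2*π*((n j + l : ℤ):ℝ)) (2*π*((n j + l : ℤ):ℝ) + 2*π) := by
      simp only [hI, hA]; push_cast; ring_nf
    rw [Function.onFun, h1, h2]
    exact disj_Ico' hne
  have hImeas : ∀ j l, MeasurableSet (I j l) := fun j l => measurableSet_Ico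
  have hEmeas : MeasurableSet E := by
    rw [hE]; exact MeasurableSet.iUnion fun j => measurableSet_Ico
  -- integrability tools
  have hInt : ∀ (h : ℝ → ℂ), MemLp h 2 volume → ∀ S : Set ℝ, volume S < ⊤ →
      IntegrableOn h S volume := by
    intro h hh S hS
    haveI : IsFiniteMeasure (volume.restrict S) := ⟨by rwa [Measure.restrict_apply_univ]⟩
    exact memLp_one_iff_integrable.1 ((hh.restrict S).mono_exponent (by norm_num))
  have hIcovol : volume (Set.Ico (0:ℝ) (2*π)) < ⊤ := by
    rw [Real.volume_Ico]; exact ENNReal.ofReal_lt_top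
  have hIvol : ∀ j l, volume (I j l) < ⊤ := by
    intro j l; rw [hI, Real.volume_Ico]; exact ENNReal.ofReal_lt_top
  have hfc : ∀ c:ℝ, MemLp (fun ξ => f (ξ + c)) 2 volume := fun c =>
    hf.comp_measurePreserving (measurePreserving_add_right volume c)
  have hsmc : ∀ c:ℝ, StronglyMeasurable (fun ξ => f (ξ + c)) := fun c =>
    hsm.comp_measurable (measurable_add_const c)
  have hexp_sm : ∀ m:ℤ, StronglyMeasurable (fun ξ:ℝ => Complex.exp (Complex.I*(m:ℂ)*(ξ:ℂ))) := by
    intro m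
    exact (Complex.continuous_exp.comp (by continuity)).stronglyMeasurable
  have hnorm_exp : ∀ (m:ℤ) (ξ:ℝ), ‖Complex.exp (Complex.I*(m:ℂ)*(ξ:ℂ))‖ = 1 := by
    intro m ξ
    rw [Complex.norm_exp]
    norm_num [Complex.mul_re]
  have hh : ∀ (m : ℤ) (c : ℝ), MemLp
      (fun t:ℝ => Complex.exp (Complex.I*(m:ℂ)*(t:ℂ)) * (starRingEnd ℂ) (f (t + c))) 2 volume := by
    intro m c
    have hmeas : StronglyMeasurable
        (fun t:ℝ => Complex.exp (Complex.I*(m:ℂ)*(t:ℂ)) * (starRingEnd ℂ) (f (t + c))) := by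
      refine (hexp_sm m).mul ?_
      exact RCLike.continuous_conj.comp_stronglyMeasurable (hsmc c)
    refine MemLp.of_le (hfc c) hmeas.aestronglyMeasurable (Filter.Eventually.of_forall fun t => ?_)
    rw [norm_mul, hnorm_exp, one_mul, RCLike.norm_conj]
  -- strong measurability of φ
  have hφsm : ∀ l : ℤ, StronglyMeasurable (φ l) := by
    intro l
    rw [hφ]
    exact Finset.stronglyMeasurable_fun_sum _ (fun j _ => hsmc (A j l))
  have hφmemall : ∀ (l : ℤ) (S : Set ℝ), MemLp (φ l) 2 (volume.restrict S) := by
    intro l S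
    rw [hφ]
    exact memLp_finsetSum _ (fun j _ => (hfc (A j l)).restrict _)
  have hφmem : ∀ l : ℤ, MemLp (φ l) 2 (volume.restrict (Set.Ioc 0 (2*π))) :=
    fun l => hφmemall l _
  -- Lemma A
  have lemA : ∀ m l : ℤ,
      ∫ t : ℝ, (Complex.exp (Complex.I * (m : ℂ) * (t : ℂ)) *
        g (t - 2 * π * (l : ℝ))) * (starRingEnd ℂ) (f t)
      = c₀ * ∫ ξ in Set.Ioc 0 (2*π),
          Complex.exp (Complex.I * (m:ℂ) * (ξ:ℂ)) * (starRingEnd ℂ) (φ l ξ) := by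
    intro m l
    set h : ℝ → ℂ := fun t => Complex.exp (Complex.I*(m:ℂ)*(t:ℂ)) * (starRingEnd ℂ) (f t) with hh'
    have hmem2 : MemLp h 2 volume := by simpa using hh m 0
    have hUint : IntegrableOn h (⋃ j, I j l) volume := by
      have : (⋃ j, I j l) = ⋃ j ∈ (Finset.univ : Finset (Fin (k+1))), I j l := by simp
      rw [this]
      exact integrableOn_finset_iUnion.2 fun j _ => hInt h hmem2 _ (hIvol j l)
    have hsplit : ∫ t in (⋃ j, I j l), h t = ∑ j : Fin (k+1), ∫ t in I j l, h t := by
      rw [integral_iUnion (fun j => hImeas j l) (hdisj l) hUint, tsum_fintype]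
    have hpiece : ∀ j : Fin (k+1), ∫ t in I j l, h t
        = ∫ ξ in Set.Ico (0:ℝ) (2*π), Complex.exp (Complex.I*(m:ℂ)*(ξ:ℂ)) *
            (starRingEnd ℂ) (f (ξ + A j l)) := by
      intro j
      rw [← integral_indicator (hImeas j l)]
      rw [show (∫ t : ℝ, Set.indicator (I j l) h t)
          = ∫ ξ : ℝ, Set.indicator (I j l) h (ξ + A j l) from
        (integral_add_right_eq_self (fun t => Set.indicator (I j l) h t) (A j l)).symm]
      rw [← integral_indicator measurableSet_Ico]
      congr 1
      ext ξ
      by_cases hξ : ξ ∈ Set.Ico (0:ℝ) (2*π)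
      · have hmem : ξ + A j l ∈ I j l := by
          simp only [hI, Set.mem_Ico] at *
          constructor <;> [linarith [hξ.1]; linarith [hξ.2]]
        rw [Set.indicator_of_mem hmem, Set.indicator_of_mem hξ, hh']
        have hexp1 : Complex.exp (Complex.I*(m:ℂ)*((ξ + A j l : ℝ):ℂ))
            = Complex.exp (Complex.I*(m:ℂ)*(ξ:ℂ)) := by
          rw [show (Complex.I*(m:ℂ)*((ξ + A j l : ℝ):ℂ))
              = Complex.I*(m:ℂ)*(ξ:ℂ) + ((m*(n j + l) : ℤ):ℂ) * (2*(π:ℂ)*Complex.I) by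
            push_cast [hA]; ring]
          rw [Complex.exp_add, Complex.exp_int_mul_two_pi_mul_I, mul_one]
        simp only []
        rw [hexp1]
      · have hmem : ξ + A j l ∉ I j l := by
          simp only [hI, Set.mem_Ico] at *
          intro hc
          rcases hc with ⟨hc1, hc2⟩
          rcases not_and_or.1 hξ with h1 | h1
          · exact h1 (by linarith)
          · push_neg at h1; linarith
        rw [Set.indicator_of_notMem hmem, Set.indicator_of_notMem hξ]
    have hptw : ∀ t : ℝ, (Complex.exp (Complex.I * (m : ℂ) * (t : ℂ)) *
        g (t - 2 * π * (l : ℝ))) * (starRingEnd ℂ) (f t)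
        = c₀ * Set.indicator (⋃ j, I j l) h t := by
      intro t
      rw [hg]
      simp only []
      by_cases ht : t - 2*π*(l:ℝ) ∈ E
      · have ht' : t ∈ ⋃ j, I j l := by rw [← hpre l]; exact ht
        rw [Set.indicator_of_mem ht', Set.indicator_of_mem ht, hh']
        simp only []
        ring
      · have ht' : t ∉ ⋃ j, I j l := by rw [← hpre l]; exact ht
        rw [Set.indicator_of_notMem ht', Set.indicator_of_notMem ht]
        ring
    rw [integral_congr_ae (Filter.Eventually.of_forall hptw)]
    simp_rw [← smul_eq_mul (a := c₀), integral_smul]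
    rw [smul_eq_mul]
    congr 1
    rw [integral_indicator (MeasurableSet.iUnion fun j => hImeas j l), hsplit]
    have hsum : ∑ j : Fin (k+1), ∫ t in I j l, h t
        = ∫ ξ in Set.Ico (0:ℝ) (2*π), Complex.exp (Complex.I*(m:ℂ)*(ξ:ℂ)) *
            (starRingEnd ℂ) (φ l ξ) := by
      rw [Finset.sum_congr rfl (fun j _ => hpiece j)]
      rw [← integral_finset_sum _ (fun j _ => hInt _ (hh m (A j l)) _ hIcovol)]
      refine setIntegral_congr_fun measurableSet_Ico (fun ξ _ => ?_)
      rw [hφ]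
      simp only []
      rw [map_sum, Finset.mul_sum]
    rw [hsum, integral_Ico_eq_integral_Ioo, ← integral_Ioc_eq_integral_Ioo]
  -- Lemma B : Parseval
  haveI : Fact ((0:ℝ) < 2*π) := ⟨hπ⟩
  have lemB : ∀ l : ℤ,
      Summable (fun m : ℤ => ‖c₀ * ∫ ξ in Set.Ioc 0 (2*π),
          Complex.exp (Complex.I * (m:ℂ) * (ξ:ℂ)) * (starRingEnd ℂ) (φ l ξ)‖^2) ∧
      (∑' m : ℤ, ‖c₀ * ∫ ξ in Set.Ioc 0 (2*π),
          Complex.exp (Complex.I * (m:ℂ) * (ξ:ℂ)) * (starRingEnd ℂ) (φ l ξ)‖^2) = b l := by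
    intro l
    set ψ : AddCircle (2*π) → ℂ := AddCircle.liftIoc (2*π) 0 (φ l) with hψ
    have hψarg : ∀ x : ℝ, x ∈ Set.Ioc (0:ℝ) (2*π) → ψ ↑x = φ l x := by
      intro x hx
      exact AddCircle.liftIoc_coe_apply (by simpa using hx)
    have hψsm : StronglyMeasurable ψ := by
      have hm : Measurable (⇑(AddCircle.equivIoc (2*π) 0)) :=
        (AddCircle.measurableEquivIoc (2*π) 0).measurable
      exact ((hφsm l).comp_measurable measurable_subtype_coe).comp_measurable hm
    have hψvol : MemLp ψ 2 (volume : Measure (AddCircle (2*π))) := by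
      rw [← (AddCircle.measurePreserving_mk (2*π) 0).map_eq]
      rw [memLp_map_measure_iff hψsm.aestronglyMeasurable
        AddCircle.measurable_mk'.aemeasurable]
      have hae : (fun x : ℝ => ψ ↑x) =ᵐ[volume.restrict (Set.Ioc 0 (0 + 2*π))] φ l := by
        filter_upwards [ae_restrict_mem measurableSet_Ioc] with x hx
        exact hψarg x (by simpa using hx)
      exact (memLp_congr_ae hae).2 (by simpa using hφmem l)
    have hhaar_eq : (AddCircle.haarAddCircle : Measure (AddCircle (2*π)))
        = (ENNReal.ofReal (2*π))⁻¹ • (volume : Measure (AddCircle (2*π))) := by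
      rw [AddCircle.volume_eq_smul_haarAddCircle, smul_smul, ENNReal.inv_mul_cancel
        (ENNReal.ofReal_pos.2 hπ).ne' ENNReal.ofReal_ne_top, one_smul]
    have hψhaar : MemLp ψ 2 (AddCircle.haarAddCircle) := by
      rw [hhaar_eq]
      exact hψvol.smul_measure (ENNReal.inv_ne_top.2 (ENNReal.ofReal_pos.2 hπ).ne')
    set Φ := hψhaar.toLp ψ with hΦ
    have hcoeff : ∀ i : ℤ, fourierCoeff (⇑Φ) i = fourierCoeff ψ i := by
      intro i
      unfold fourierCoeff
      apply integral_congr_ae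
      filter_upwards [hψhaar.coeFn_toLp] with t ht
      rw [ht]
    have hpars := tsum_sq_fourierCoeff Φ
    have hsummable : Summable (fun i : ℤ => ‖fourierCoeff (⇑Φ) i‖^2) := by
      have h1 := lp.memℓp (fourierBasis.repr Φ)
      rw [memℓp_gen_iff (by norm_num : (0:ℝ) < ((2:ℝ≥0∞)).toReal)] at h1
      have h2 : ∀ i : ℤ, ‖fourierBasis.repr Φ i‖ ^ ((2:ℝ≥0∞)).toReal
          = ‖fourierCoeff (⇑Φ) i‖^2 := by
        intro i
        rw [fourierBasis_repr]
        norm_num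
      exact (summable_congr h2).1 h1
    have hfc_eq : ∀ i : ℤ, (∫ x in Set.Ioc (0:ℝ) (2*π),
        Complex.exp (-(Complex.I*(i:ℂ)*(x:ℂ))) * φ l x)
        = (2*π:ℝ) • fourierCoeff ψ i := by
      intro i
      rw [hψ, fourierCoeff_liftIoc_eq, fourierCoeffOn_eq_integral]
      rw [smul_smul]
      rw [intervalIntegral.integral_of_le (by simpa using hπ.le)]
      simp only [zero_add, sub_zero]
      rw [show (2*π) * (1/(2*π)) = (1:ℝ) by field_simp, one_smul]
      refine setIntegral_congr_fun measurableSet_Ioc (fun x hx => ?_)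
      rw [fourier_coe_apply]
      rw [smul_eq_mul]
      congr 2
      push_cast
      field_simp
      ring_nf
    have hJconj : ∀ i : ℤ, (∫ x in Set.Ioc (0:ℝ) (2*π),
        Complex.exp (Complex.I*(i:ℂ)*(x:ℂ)) * (starRingEnd ℂ) (φ l x))
        = (starRingEnd ℂ) (∫ x in Set.Ioc (0:ℝ) (2*π),
            Complex.exp (-(Complex.I*(i:ℂ)*(x:ℂ))) * φ l x) := by
      intro i
      rw [← integral_conj]
      refine setIntegral_congr_fun measurableSet_Ioc (fun x hx => ?_)
      rw [map_mul, ← Complex.exp_conj]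
      congr 2
      simp [map_neg, map_mul, Complex.conj_I, Complex.conj_ofReal]
    have hnormc₀ : ‖c₀‖^2 = 1/(2*π) := by
      rw [hc₀, Complex.norm_real, Real.norm_eq_abs, abs_of_pos (by positivity), div_pow,
        one_pow, Real.sq_sqrt hπ.le]
    have key : ∀ i : ℤ, ‖c₀ * ∫ ξ in Set.Ioc 0 (2*π),
        Complex.exp (Complex.I * (i:ℂ) * (ξ:ℂ)) * (starRingEnd ℂ) (φ l ξ)‖^2
        = (2*π) * ‖fourierCoeff (⇑Φ) i‖^2 := by
      intro i
      rw [hJconj i, norm_mul, mul_pow, RCLike.norm_conj, hfc_eq i, hcoeff i, hnormc₀]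
      rw [norm_smul, Real.norm_eq_abs, abs_of_pos hπ, mul_pow]
      rw [← mul_assoc]
      congr 1
      field_simp
    have hψint : ∫ t : AddCircle (2*π), ‖ψ t‖^2 ∂AddCircle.haarAddCircle
        = (1/(2*π)) * ∫ x in Set.Ioc (0:ℝ) (2*π), ‖φ l x‖^2 := by
      have h1 : (∫ x in Set.Ioc (0:ℝ) (0 + 2*π), ‖ψ ↑x‖^2)
          = ∫ t : AddCircle (2*π), ‖ψ t‖^2 ∂(volume) :=
        AddCircle.integral_preimage (2*π) 0 (fun t => ‖ψ t‖^2)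
      rw [AddCircle.volume_eq_smul_haarAddCircle, integral_smul_measure,
        ENNReal.toReal_ofReal hπ.le] at h1
      have h2 : (∫ x in Set.Ioc (0:ℝ) (0 + 2*π), ‖ψ ↑x‖^2)
          = ∫ x in Set.Ioc (0:ℝ) (2*π), ‖φ l x‖^2 := by
        simp only [zero_add]
        refine setIntegral_congr_fun measurableSet_Ioc (fun x hx => ?_)
        rw [hψarg x hx]
      rw [h2] at h1
      rw [smul_eq_mul] at h1
      rw [h1]
      field_simp
    have hΦint : ∫ t : AddCircle (2*π), ‖(⇑Φ) t‖^2 ∂AddCircle.haarAddCircle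
        = ∫ t : AddCircle (2*π), ‖ψ t‖^2 ∂AddCircle.haarAddCircle := by
      apply integral_congr_ae
      filter_upwards [hψhaar.coeFn_toLp] with t ht
      rw [ht]
    constructor
    · exact (summable_congr key).2 (hsummable.mul_left (2*π))
    · calc (∑' m : ℤ, ‖c₀ * ∫ ξ in Set.Ioc 0 (2*π),
          Complex.exp (Complex.I * (m:ℂ) * (ξ:ℂ)) * (starRingEnd ℂ) (φ l ξ)‖^2)
          = ∑' m : ℤ, (2*π) * ‖fourierCoeff (⇑Φ) m‖^2 := tsum_congr key
        _ = (2*π) * ∑' m : ℤ, ‖fourierCoeff (⇑Φ) m‖^2 := tsum_mul_left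
        _ = (2*π) * ∫ t : AddCircle (2*π), ‖(⇑Φ) t‖^2 ∂AddCircle.haarAddCircle := by
            rw [hpars]
        _ = b l := by
            rw [hΦint, hψint, hb, ← mul_assoc]
            field_simp
  -- F is a shifted version of φ
  have hFsm : ∀ m : ℤ, StronglyMeasurable (F m) := by
    intro m
    rw [hF]
    refine Finset.stronglyMeasurable_fun_sum _ (fun j _ => hsm.comp_measurable ?_)
    refine (measurable_id.sub ?_).add_const _
    exact (measurable_from_top.comp ((measurable_id.div_const _).floor)).const_mul _
  have hFshift : ∀ (m : ℤ) (j : Fin (k+1)) (ξ : ℝ), ξ ∈ Set.Ico (0:ℝ) (2*π) →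
      F m (ξ + A j m) = φ m ξ := by
    intro m j ξ hξ
    have harg : ξ + A j m = ξ + 2*π*((n j + m : ℤ):ℝ) := by rw [hA]; push_cast; ring
    rw [hF, hφ]
    simp only []
    refine Finset.sum_congr rfl (fun j' _ => ?_)
    congr 1
    rw [harg, floor_shift' hξ (n j + m), hA]
    push_cast
    ring
  have hφsq_int : ∀ (m : ℤ) (S : Set ℝ), MeasurableSet S → volume S < ⊤ →
      IntegrableOn (fun ξ => ‖φ m ξ‖^2) S volume := by
    intro m S hSm hS
    haveI : IsFiniteMeasure (volume.restrict S) := ⟨by rwa [Measure.restrict_apply_univ]⟩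
    exact (memLp_two_iff_integrable_sq_norm
      (hφsm m).aestronglyMeasurable.restrict).1 ((hφmemall m S))
  have lemC : ∀ m : ℤ,
      ∫ ξ : ℝ, ‖F m ξ * E.indicator (fun _ => (1 : ℂ)) (ξ - 2 * π * (m : ℝ))‖ ^ 2
        = ((k:ℝ)+1) * b m := by
    intro m
    set u : ℝ → ℝ := fun ξ => ‖F m ξ‖^2 with hu
    have hptw : ∀ ξ : ℝ, ‖F m ξ * E.indicator (fun _ => (1 : ℂ)) (ξ - 2 * π * (m : ℝ))‖ ^ 2
        = Set.indicator (⋃ j, I j m) u ξ := by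
      intro ξ
      by_cases hξ : ξ - 2*π*(m:ℝ) ∈ E
      · have hξ' : ξ ∈ ⋃ j, I j m := by rw [← hpre m]; exact hξ
        rw [Set.indicator_of_mem hξ, Set.indicator_of_mem hξ', mul_one]
      · have hξ' : ξ ∉ ⋃ j, I j m := by rw [← hpre m]; exact hξ
        rw [Set.indicator_of_notMem hξ, Set.indicator_of_notMem hξ', mul_zero]
        simp
    have hshift_eq : ∀ j : Fin (k+1), (fun ξ => Set.indicator (I j m) u (ξ + A j m))
        = fun ξ => Set.indicator (Set.Ico (0:ℝ) (2*π)) (fun ζ => ‖φ m ζ‖^2) ξ := by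
      intro j
      funext ξ
      by_cases hξ : ξ ∈ Set.Ico (0:ℝ) (2*π)
      · have hmem : ξ + A j m ∈ I j m := by
          simp only [hI, Set.mem_Ico] at *
          constructor <;> [linarith [hξ.1]; linarith [hξ.2]]
        rw [Set.indicator_of_mem hmem, Set.indicator_of_mem hξ, hu]
        simp only []
        rw [hFshift m j ξ hξ]
      · have hmem : ξ + A j m ∉ I j m := by
          simp only [hI, Set.mem_Ico] at *
          intro hc
          rcases hc with ⟨hc1, hc2⟩
          rcases not_and_or.1 hξ with h1 | h1
          · exact h1 (by linarith)
          · push_neg at h1; linarith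
        rw [Set.indicator_of_notMem hmem, Set.indicator_of_notMem hξ]
    have hind_int : ∀ j : Fin (k+1), Integrable (fun ξ => Set.indicator (I j m) u ξ) volume := by
      intro j
      have hmeas : AEStronglyMeasurable (fun ξ => Set.indicator (I j m) u ξ) volume := by
        refine AEStronglyMeasurable.indicator ?_ (hImeas j m)
        exact (((hFsm m).norm).pow 2).aestronglyMeasurable
      rw [← (measurePreserving_add_right volume (A j m)).map_eq] at hmeas ⊢
      rw [integrable_map_measure hmeas (measurable_add_const (A j m)).aemeasurable]
      have : ((fun ξ => Set.indicator (I j m) u ξ) ∘ (fun ξ => ξ + A j m))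
          = fun ξ => Set.indicator (Set.Ico (0:ℝ) (2*π)) (fun ζ => ‖φ m ζ‖^2) ξ := by
        funext ξ
        exact congrFun (hshift_eq j) ξ
      rw [this]
      rw [integrable_indicator_iff measurableSet_Ico]
      exact hφsq_int m _ measurableSet_Ico hIcovol
    have hpieceC : ∀ j : Fin (k+1), ∫ ξ in I j m, u ξ
        = ∫ ξ in Set.Ico (0:ℝ) (2*π), ‖φ m ξ‖^2 := by
      intro j
      rw [← integral_indicator (hImeas j m)]
      rw [show (∫ ξ : ℝ, Set.indicator (I j m) u ξ)
          = ∫ ξ : ℝ, Set.indicator (I j m) u (ξ + A j m) from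
        (integral_add_right_eq_self (fun ξ => Set.indicator (I j m) u ξ) (A j m)).symm]
      rw [show (fun ξ : ℝ => Set.indicator (I j m) u (ξ + A j m))
          = fun ξ => Set.indicator (Set.Ico (0:ℝ) (2*π)) (fun ζ => ‖φ m ζ‖^2) ξ from
        hshift_eq j]
      exact integral_indicator measurableSet_Ico
    calc ∫ ξ : ℝ, ‖F m ξ * E.indicator (fun _ => (1 : ℂ)) (ξ - 2 * π * (m : ℝ))‖ ^ 2
        = ∫ ξ : ℝ, Set.indicator (⋃ j, I j m) u ξ :=
          integral_congr_ae (Filter.Eventually.of_forall hptw)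
      _ = ∫ ξ in (⋃ j, I j m), u ξ := integral_indicator (MeasurableSet.iUnion fun j => hImeas j m)
      _ = ∑ j : Fin (k+1), ∫ ξ in I j m, u ξ := by
          rw [integral_iUnion (fun j => hImeas j m) (hdisj m) ?_, tsum_fintype]
          have : (⋃ j, I j m) = ⋃ j ∈ (Finset.univ : Finset (Fin (k+1))), I j m := by simp
          rw [this]
          refine integrableOn_finset_iUnion.2 fun j _ => ?_
          exact (integrable_indicator_iff (hImeas j m)).1 (hind_int j)
      _ = ∑ j : Fin (k+1), ∫ ξ in Set.Ico (0:ℝ) (2*π), ‖φ m ξ‖^2 :=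
          Finset.sum_congr rfl (fun j _ => hpieceC j)
      _ = ((k:ℝ)+1) * b m := by
          rw [Finset.sum_const, Finset.card_univ, Fintype.card_fin, nsmul_eq_mul, hb]
          simp only []
          rw [integral_Ico_eq_integral_Ioo, ← integral_Ioc_eq_integral_Ioo]
          push_cast
          ring
  -- summability of b
  have hf2int : Integrable (fun t => ‖f t‖^2) volume :=
    (memLp_two_iff_integrable_sq_norm hsm.aestronglyMeasurable).1 hf
  have hsumb : Summable b := by
    set d : Fin (k+1) → ℤ → ℝ := fun j l => ∫ ξ in Set.Ioc (0:ℝ) (2*π), ‖f (ξ + A j l)‖^2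
      with hd
    have hfsq_int : ∀ (c : ℝ) (S : Set ℝ), MeasurableSet S → volume S < ⊤ →
        IntegrableOn (fun ξ => ‖f (ξ + c)‖^2) S volume := by
      intro c S hSm hS
      haveI : IsFiniteMeasure (volume.restrict S) := ⟨by rwa [Measure.restrict_apply_univ]⟩
      exact (memLp_two_iff_integrable_sq_norm
        (hsmc c).aestronglyMeasurable.restrict).1 ((hfc c).restrict S)
    have hIocvol : volume (Set.Ioc (0:ℝ) (2*π)) < ⊤ := by
      rw [Real.volume_Ioc]; exact ENNReal.ofReal_lt_top
    have hd_nonneg : ∀ j l, 0 ≤ d j l := fun j l => integral_nonneg (fun ξ => by positivity)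
    -- d j l as an integral over a shifted interval
    have hd_eq : ∀ j l, d j l = ∫ t in Set.Ioc (A j l) (A j l + 2*π), ‖f t‖^2 := by
      intro j l
      rw [hd]
      simp only []
      rw [← integral_indicator measurableSet_Ioc, ← integral_indicator measurableSet_Ioc]
      rw [show (∫ t : ℝ, Set.indicator (Set.Ioc (A j l) (A j l + 2*π)) (fun t => ‖f t‖^2) t)
          = ∫ ξ : ℝ, Set.indicator (Set.Ioc (A j l) (A j l + 2*π)) (fun t => ‖f t‖^2) (ξ + A j l)
          from (integral_add_right_eq_self _ (A j l)).symm]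
      congr 1
      funext ξ
      by_cases hξ : ξ ∈ Set.Ioc (0:ℝ) (2*π)
      · have hmem : ξ + A j l ∈ Set.Ioc (A j l) (A j l + 2*π) := by
          simp only [Set.mem_Ioc] at *
          constructor <;> [linarith [hξ.1]; linarith [hξ.2]]
        rw [Set.indicator_of_mem hξ, Set.indicator_of_mem hmem]
      · have hmem : ξ + A j l ∉ Set.Ioc (A j l) (A j l + 2*π) := by
          simp only [Set.mem_Ioc] at *
          intro hc
          rcases hc with ⟨hc1, hc2⟩
          rcases not_and_or.1 hξ with h1 | h1
          · exact h1 (by linarith)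
          · push_neg at h1; linarith
        rw [Set.indicator_of_notMem hξ, Set.indicator_of_notMem hmem]
    have hd_summable : ∀ j : Fin (k+1), Summable (fun l : ℤ => d j l) := by
      intro j
      refine summable_of_sum_le (c := ∫ t : ℝ, ‖f t‖^2) (fun l => hd_nonneg j l) (fun u => ?_)
      have hdisj' : (↑u : Set ℤ).Pairwise
          (Function.onFun Disjoint fun l => Set.Ioc (A j l) (A j l + 2*π)) := by
        intro l₁ _ l₂ _ hne
        rw [Function.onFun, Set.Ioc_disjoint_Ioc]
        rcases lt_or_gt_of_ne hne with h | h
        · have : (l₁:ℝ) + 1 ≤ l₂ := by exact_mod_cast h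
          calc min (A j l₁ + 2*π) (A j l₂ + 2*π) ≤ A j l₁ + 2*π := min_le_left _ _
          _ ≤ A j l₂ := by rw [hA]; simp only []; nlinarith
          _ ≤ max (A j l₁) (A j l₂) := le_max_right _ _
        · have : (l₂:ℝ) + 1 ≤ l₁ := by exact_mod_cast h
          calc min (A j l₁ + 2*π) (A j l₂ + 2*π) ≤ A j l₂ + 2*π := min_le_right _ _
          _ ≤ A j l₁ := by rw [hA]; simp only []; nlinarith
          _ ≤ max (A j l₁) (A j l₂) := le_max_left _ _
      calc ∑ l ∈ u, d j l
          = ∑ l ∈ u, ∫ t in Set.Ioc (A j l) (A j l + 2*π), ‖f t‖^2 :=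
            Finset.sum_congr rfl (fun l _ => hd_eq j l)
        _ = ∫ t in (⋃ l ∈ u, Set.Ioc (A j l) (A j l + 2*π)), ‖f t‖^2 := by
            rw [integral_biUnion_finset u (fun l _ => measurableSet_Ioc) hdisj'
              (fun l _ => hf2int.integrableOn)]
        _ ≤ ∫ t : ℝ, ‖f t‖^2 :=
            setIntegral_le_integral hf2int (Filter.Eventually.of_forall (fun t => by positivity))
    have hb_nonneg : ∀ l, 0 ≤ b l := fun l => integral_nonneg (fun ξ => by positivity)
    have hb_le : ∀ l : ℤ, b l ≤ ((k:ℝ)+1) * ∑ j : Fin (k+1), d j l := by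
      intro l
      rw [hb]
      simp only []
      have hint2 : Integrable (fun ξ => ((k:ℝ)+1) * ∑ j : Fin (k+1), ‖f (ξ + A j l)‖^2)
          (volume.restrict (Set.Ioc 0 (2*π))) := by
        refine Integrable.const_mul ?_ _
        exact integrable_finset_sum _ (fun j _ => hfsq_int (A j l) _ measurableSet_Ioc hIocvol)
      have hptle : ∀ ξ : ℝ, ‖φ l ξ‖^2 ≤ ((k:ℝ)+1) * ∑ j : Fin (k+1), ‖f (ξ + A j l)‖^2 := by
        intro ξ
        have h1 : ‖φ l ξ‖ ≤ ∑ j : Fin (k+1), ‖f (ξ + A j l)‖ := by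
          rw [hφ]; exact norm_sum_le _ _
        have h2 : ‖φ l ξ‖^2 ≤ (∑ j : Fin (k+1), ‖f (ξ + A j l)‖)^2 := by
          have := norm_nonneg (φ l ξ)
          nlinarith [Finset.sum_nonneg (fun j (_ : j ∈ Finset.univ) =>
            norm_nonneg (f (ξ + A j l)))]
        refine h2.trans ?_
        have h3 := sq_sum_le_card_mul_sum_sq
          (s := (Finset.univ : Finset (Fin (k+1)))) (f := fun j => ‖f (ξ + A j l)‖)
        simpa [Finset.card_univ] using h3
      calc (∫ ξ in Set.Ioc (0:ℝ) (2*π), ‖φ l ξ‖^2)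
          ≤ ∫ ξ in Set.Ioc (0:ℝ) (2*π), ((k:ℝ)+1) * ∑ j : Fin (k+1), ‖f (ξ + A j l)‖^2 :=
            integral_mono (hφsq_int l _ measurableSet_Ioc hIocvol) hint2
              (fun ξ => hptle ξ)
        _ = ((k:ℝ)+1) * ∑ j : Fin (k+1), d j l := by
            rw [integral_const_mul]
            congr 1
            rw [integral_finset_sum _ (fun j _ => hfsq_int (A j l) _ measurableSet_Ioc hIocvol)]
    refine Summable.of_nonneg_of_le hb_nonneg hb_le ?_
    exact ((summable_sum (fun j _ => hd_summable j)).mul_left _)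
  -- assembly
  set V : ℤ × ℤ → ℝ := fun q => ‖c₀ * ∫ ξ in Set.Ioc 0 (2*π),
      Complex.exp (Complex.I * (q.2:ℂ) * (ξ:ℂ)) * (starRingEnd ℂ) (φ q.1 ξ)‖^2 with hV
  have hVnn : 0 ≤ V := fun q => by positivity
  have hVsum : Summable V := by
    rw [summable_prod_of_nonneg hVnn]
    refine ⟨fun l => (lemB l).1, ?_⟩
    have : (fun l : ℤ => ∑' m : ℤ, V (l, m)) = b := funext fun l => (lemB l).2
    rw [this]; exact hsumb
  have hLHS : ∑' p : ℤ × ℤ, ‖∫ t : ℝ, (Complex.exp (Complex.I * (p.1 : ℂ) * (t : ℂ)) *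
        g (t - 2 * π * (p.2 : ℝ))) * (starRingEnd ℂ) (f t)‖ ^ 2 = ∑' l : ℤ, b l := by
    have h1 : ∀ p : ℤ × ℤ, ‖∫ t : ℝ, (Complex.exp (Complex.I * (p.1 : ℂ) * (t : ℂ)) *
        g (t - 2 * π * (p.2 : ℝ))) * (starRingEnd ℂ) (f t)‖ ^ 2 = V ((Equiv.prodComm ℤ ℤ) p) := by
      intro p
      rw [lemA p.1 p.2]
      rfl
    calc ∑' p : ℤ × ℤ, ‖∫ t : ℝ, (Complex.exp (Complex.I * (p.1 : ℂ) * (t : ℂ)) *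
        g (t - 2 * π * (p.2 : ℝ))) * (starRingEnd ℂ) (f t)‖ ^ 2
        = ∑' p : ℤ × ℤ, V ((Equiv.prodComm ℤ ℤ) p) := tsum_congr h1
      _ = ∑' q : ℤ × ℤ, V q := (Equiv.prodComm ℤ ℤ).tsum_eq V
      _ = ∑' (l : ℤ) (m : ℤ), V (l, m) := Summable.tsum_prod' hVsum (fun l => (lemB l).1)
      _ = ∑' l : ℤ, b l := tsum_congr fun l => (lemB l).2
  rw [hLHS]
  have hRHS : ∑' m : ℤ,
      ∫ ξ : ℝ, ‖F m ξ * E.indicator (fun _ => (1 : ℂ)) (ξ - 2 * π * (m : ℝ))‖ ^ 2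
      = ((k:ℝ)+1) * ∑' l : ℤ, b l := by
    rw [← tsum_mul_left]
    exact tsum_congr lemC
  rw [hRHS, ← mul_assoc]
  have hone : ((1:ℝ)/(k+1)) * ((k:ℝ)+1) = 1 := by field_simp
  rw [hone, one_mul]

/-- For `E = ⋃_{j=0}^k ([0,2π)+2πn_j)`, `Eₙ = E + 2πn` and `g = (1/√(2π)) χ_E`, for every
`f ∈ L²(ℝ)` one has `∑_{m,n∈ℤ} |⟨Mₘ T_{2nπ} g, f⟩|² = (1/(k+1)) ∑_{n∈ℤ} ‖Fₙ ⬝ χ_{Eₙ}‖²`,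
where `Fₘ` is the `2π`-periodic function with `Fₘ(ξ) = ∑_{j=0}^k f(ξ+2π(n_j+m))` on
`[0,2π)`. -/
theorem stmt_3 (k : ℕ) (n : Fin (k + 1) → ℤ)
    (hn0 : n 0 = 0) (hmono : StrictMono n)
    (E : Set ℝ)
    (hE : E = ⋃ j : Fin (k + 1),
      Set.Ico (2 * π * (n j : ℝ)) (2 * π * (n j : ℝ) + 2 * π))
    (g : ℝ → ℂ) (hg : g = fun t : ℝ =>
      (1 / Real.sqrt (2 * π) : ℝ) * E.indicator (fun _ => (1 : ℂ)) t)
    (f : ℝ → ℂ) (hf : MemLp f 2 volume)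
    (F : ℤ → ℝ → ℂ)
    (hF : F = fun (m : ℤ) (ξ : ℝ) => ∑ j : Fin (k + 1),
      f ((ξ - 2 * π * (⌊ξ / (2 * π)⌋ : ℝ)) + 2 * π * ((n j : ℝ) + (m : ℝ)))) :
    ∑' p : ℤ × ℤ, ‖∫ t : ℝ, (Complex.exp (Complex.I * (p.1 : ℂ) * (t : ℂ)) *
        g (t - 2 * π * (p.2 : ℝ))) * (starRingEnd ℂ) (f t)‖ ^ 2 =
      ((1 : ℝ) / (k + 1)) * ∑' m : ℤ,
        ∫ ξ : ℝ, ‖F m ξ * E.indicator (fun _ => (1 : ℂ)) (ξ - 2 * π * (m : ℝ))‖ ^ 2 := by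
  obtain ⟨f', hf'sm, hff'⟩ : ∃ f' : ℝ → ℂ, StronglyMeasurable f' ∧ f =ᵐ[volume] f' :=
    ⟨hf.1.mk f, hf.1.stronglyMeasurable_mk, hf.1.ae_eq_mk⟩
  have hf' : MemLp f' 2 volume := hf.ae_eq hff'
  have hN : volume {x : ℝ | f x ≠ f' x} = 0 := by
    exact ae_iff.1 hff'
  set F' : ℤ → ℝ → ℂ := fun (m : ℤ) (ξ : ℝ) => ∑ j : Fin (k + 1),
      f' ((ξ - 2 * π * (⌊ξ / (2 * π)⌋ : ℝ)) + 2 * π * ((n j : ℝ) + (m : ℝ))) with hF'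
  have main := stmt_3_aux k n hmono E hE g hg f' hf' hf'sm F' rfl
  have hFae : ∀ m : ℤ, F m =ᵐ[volume] F' m := by
    intro m
    have hj : ∀ j : Fin (k+1), ∀ᵐ ξ : ℝ,
        f ((ξ - 2 * π * (⌊ξ / (2 * π)⌋ : ℝ)) + 2 * π * ((n j : ℝ) + (m : ℝ)))
        = f' ((ξ - 2 * π * (⌊ξ / (2 * π)⌋ : ℝ)) + 2 * π * ((n j : ℝ) + (m : ℝ))) := by
      intro j
      have h0 := null_preimage' (2 * π * ((n j : ℝ) + (m : ℝ))) hN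
      rw [ae_iff]
      refine measure_mono_null ?_ h0
      intro ξ hξ
      exact hξ
    have hall : ∀ᵐ ξ : ℝ, ∀ j : Fin (k+1),
        f ((ξ - 2 * π * (⌊ξ / (2 * π)⌋ : ℝ)) + 2 * π * ((n j : ℝ) + (m : ℝ)))
        = f' ((ξ - 2 * π * (⌊ξ / (2 * π)⌋ : ℝ)) + 2 * π * ((n j : ℝ) + (m : ℝ))) :=
      (Filter.eventually_all).2 hj
    filter_upwards [hall] with ξ hξ
    rw [hF, hF']
    exact Finset.sum_congr rfl (fun j _ => hξ j)
  have hL : ∀ p : ℤ × ℤ,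
      (∫ t : ℝ, (Complex.exp (Complex.I * (p.1 : ℂ) * (t : ℂ)) *
        g (t - 2 * π * (p.2 : ℝ))) * (starRingEnd ℂ) (f t))
      = ∫ t : ℝ, (Complex.exp (Complex.I * (p.1 : ℂ) * (t : ℂ)) *
        g (t - 2 * π * (p.2 : ℝ))) * (starRingEnd ℂ) (f' t) := by
    intro p
    apply integral_congr_ae
    filter_upwards [hff'] with t ht
    rw [ht]
  have hR : ∀ m : ℤ,
      (∫ ξ : ℝ, ‖F m ξ * E.indicator (fun _ => (1 : ℂ)) (ξ - 2 * π * (m : ℝ))‖ ^ 2)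
      = ∫ ξ : ℝ, ‖F' m ξ * E.indicator (fun _ => (1 : ℂ)) (ξ - 2 * π * (m : ℝ))‖ ^ 2 := by
    intro m
    apply integral_congr_ae
    filter_upwards [hFae m] with ξ hξ
    rw [hξ]
  calc ∑' p : ℤ × ℤ, ‖∫ t : ℝ, (Complex.exp (Complex.I * (p.1 : ℂ) * (t : ℂ)) *
        g (t - 2 * π * (p.2 : ℝ))) * (starRingEnd ℂ) (f t)‖ ^ 2
      = ∑' p : ℤ × ℤ, ‖∫ t : ℝ, (Complex.exp (Complex.I * (p.1 : ℂ) * (t : ℂ)) *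
        g (t - 2 * π * (p.2 : ℝ))) * (starRingEnd ℂ) (f' t)‖ ^ 2 :=
        tsum_congr (fun p => by rw [hL p])
    _ = ((1 : ℝ) / (k + 1)) * ∑' m : ℤ,
        ∫ ξ : ℝ, ‖F' m ξ * E.indicator (fun _ => (1 : ℂ)) (ξ - 2 * π * (m : ℝ))‖ ^ 2 := main
    _ = ((1 : ℝ) / (k + 1)) * ∑' m : ℤ,
        ∫ ξ : ℝ, ‖F m ξ * E.indicator (fun _ => (1 : ℂ)) (ξ - 2 * π * (m : ℝ))‖ ^ 2 := by
        rw [tsum_congr (fun m => (hR m))]
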